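/- Let G=(V,E) be a complete simple directed graph on V=[p] containing all self-loops, i.e., for every pair of distinct nodes i,j exactly one of the edges (i,j), (j,i) belongs to E. Then for every symmetric positive definite p×p matrix C, the graphical continuous Lyapunov model satisfies M_{G,C} = PD_p, the set of all symmetric positive definite p×p matrices. -/

import Mathlib

open Matrix MeasureTheory

/-- A real square matrix is *stable* if every eigenvalue (over `ℂ`) has strictly
negative real part. -/
def IsStableMat {n : Type*} [Fintype n] [DecidableEq n] (M : Matrix n n ℝ) : Prop :=
  ∀ μ ∈ spectrum ℂ (M.map (algebraMap ℝ ℂ)), μ.re < 0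

/-- `M ∈ ℝ^E`: the matrix `M` is supported on the directed graph with edge set `E`,
i.e. `M j i = 0` whenever `(i, j) ∉ E`. -/
def InSupp {n : Type*} (E : Set (n × n)) (M : Matrix n n ℝ) : Prop :=
  ∀ i j : n, (i, j) ∉ E → M j i = 0

/-- The graphical continuous Lyapunov model `M_{G,C}`: positive definite matrices `S`
such that `M * S + S * Mᵀ + C = 0` for some `M ∈ ℝ^E`. -/
def LyapModel {n : Type*} [Fintype n] [DecidableEq n] (E : Set (n × n))
    (C : Matrix n n ℝ) : Set (Matrix n n ℝ) :=
  {S | S.PosDef ∧ ∃ M : Matrix n n ℝ, InSupp E M ∧ M * S + S * Mᵀ + C = 0}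

/-- Global identifiability: no two stable matrices supported on `E` yield the same
solution of the Lyapunov equation.  (Since for stable `M` the Lyapunov equation has a
unique positive definite solution `Σ(M,C)`, this is equivalent to every fiber
`F_{G,C}(M₀)` being the singleton `{M₀}`.) -/
def GloballyIdentifiable {n : Type*} [Fintype n] [DecidableEq n] (E : Set (n × n))
    (C : Matrix n n ℝ) : Prop :=
  ∀ M₁ M₂ : Matrix n n ℝ,
    InSupp E M₁ → IsStableMat M₁ → InSupp E M₂ → IsStableMat M₂ →
    ∀ S : Matrix n n ℝ, S.PosDef →
      M₁ * S + S * M₁ᵀ + C = 0 → M₂ * S + S * M₂ᵀ + C = 0 → M₁ = M₂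

/-- A directed graph is *simple* if it has no 2-cycles between distinct nodes. -/
def IsSimpleDigraph {n : Type*} (E : Set (n × n)) : Prop :=
  ∀ i j : n, i ≠ j → (i, j) ∈ E → (j, i) ∉ E

/-- The fiber `F_{G,C}(M₀)`: all stable matrices supported on `E` whose Lyapunov
solution coincides with that of `M₀`, i.e. some positive definite `S` solves the
Lyapunov equation for both `M₀` and `M`. -/
def Fiber {n : Type*} [Fintype n] [DecidableEq n] (E : Set (n × n))
    (C M₀ : Matrix n n ℝ) : Set (Matrix n n ℝ) :=
  {M | InSupp E M ∧ IsStableMat M ∧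
    ∃ S : Matrix n n ℝ, S.PosDef ∧ M₀ * S + S * M₀ᵀ + C = 0 ∧ M * S + S * Mᵀ + C = 0}

/-- The identification of the coordinate space `ℝ^{|E|}` with the matrices in `ℝ^E`:
the coordinate attached to an edge `(i,j)` is the entry `M j i`. -/
def edgeMatrix {p : ℕ} (E : Finset (Fin p × Fin p)) (f : E → ℝ) :
    Matrix (Fin p) (Fin p) ℝ :=
  fun j i => if h : (i, j) ∈ E then f ⟨(i, j), h⟩ else 0

/-- Generic identifiability: the set of parameter vectors `f ∈ ℝ^{|E|}` whose matrix
is stable but whose fiber is not a singleton is a Lebesgue null set. -/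
def GenericallyIdentifiable {p : ℕ} (E : Finset (Fin p × Fin p))
    (C : Matrix (Fin p) (Fin p) ℝ) : Prop :=
  volume {f : E → ℝ | IsStableMat (edgeMatrix E f) ∧
    Fiber (E : Set (Fin p × Fin p)) C (edgeMatrix E f) ≠ {edgeMatrix E f}} = 0

open Classical in
/-- Projection of a matrix onto the pattern of `E`. -/
noncomputable def projE {p : ℕ} (E : Set (Fin p × Fin p)) (A : Matrix (Fin p) (Fin p) ℝ) :
    Matrix (Fin p) (Fin p) ℝ :=
  fun j i => if (i, j) ∈ E then A j i else 0

lemma projE_inSupp {p : ℕ} (E : Set (Fin p × Fin p)) (A : Matrix (Fin p) (Fin p) ℝ) :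
    InSupp E (projE E A) := by
  intro i j h
  simp [projE, h]

/-- The submodule of matrices supported on `E`. -/
def suppSub {p : ℕ} (E : Set (Fin p × Fin p)) : Submodule ℝ (Matrix (Fin p) (Fin p) ℝ) where
  carrier := {M | InSupp E M}
  add_mem' := by
    intro a b ha hb i j h
    simp [Matrix.add_apply, ha i j h, hb i j h]
  zero_mem' := by intro i j h; simp
  smul_mem' := by
    intro c a ha i j h
    simp [ha i j h]

/-- A symmetric matrix vanishing on the pattern of a complete simple graph is zero. -/
lemma symm_eq_zero_of_projE {p : ℕ} (E : Set (Fin p × Fin p))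
    (hloops : ∀ i : Fin p, (i, i) ∈ E)
    (hcomp : ∀ i j : Fin p, i ≠ j → Xor' ((i, j) ∈ E) ((j, i) ∈ E))
    (A : Matrix (Fin p) (Fin p) ℝ) (hA : Aᵀ = A) (h : projE E A = 0) : A = 0 := by
  have key : ∀ a b : Fin p, (b, a) ∈ E → A a b = 0 := by
    intro a b hba
    have := congrFun (congrFun h a) b
    simpa [projE, hba] using this
  ext a b
  rcases eq_or_ne a b with rfl | hne
  · simpa using key a a (hloops a)
  · rcases hcomp a b hne with ⟨hab, hnba⟩ | ⟨hba, hnab⟩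
    · have h1 : A b a = 0 := key b a hab
      have h2 : A a b = A b a := by
        have := congrFun (congrFun hA a) b
        simpa using this.symm
      simp [h2, h1]
    · simpa using key a b hba

lemma skew_trace_sq {p : ℕ} (Y : Matrix (Fin p) (Fin p) ℝ) (hY : Yᵀ = -Y) :
    (Y * Y).trace = -∑ i, ∑ j, (Y i j)^2 := by
  have hYij : ∀ i j, Y j i = -Y i j := fun i j => by
    have := congrFun (congrFun hY i) j
    simpa using this
  rw [Matrix.trace, ← Finset.sum_neg_distrib]
  refine Finset.sum_congr rfl fun i _ => ?_
  rw [Matrix.diag_apply, Matrix.mul_apply, ← Finset.sum_neg_distrib]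
  refine Finset.sum_congr rfl fun j _ => ?_
  rw [hYij i j]
  ring

/-- Key injectivity: if `M` is supported on a complete simple graph and
`M*S + S*Mᵀ = 0` with `S` positive definite, then `M = 0`. -/
lemma lyap_inj_core {p : ℕ} (E : Set (Fin p × Fin p))
    (hcomp : ∀ i j : Fin p, i ≠ j → Xor' ((i, j) ∈ E) ((j, i) ∈ E))
    {S M : Matrix (Fin p) (Fin p) ℝ} (hS : S.PosDef)
    (hsupp : InSupp E M) (h : M * S + S * Mᵀ = 0) : M = 0 := by
  have hSsymm : Sᵀ = S := by
    have := hS.1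
    rwa [Matrix.IsHermitian, Matrix.conjTranspose_eq_transpose_of_trivial] at this
  have hdetS : IsUnit S.det := isUnit_iff_ne_zero.mpr hS.det_pos.ne'
  set K := M * S with hK
  have hKskew : Kᵀ = -K := by
    rw [hK, Matrix.transpose_mul, hSsymm, eq_neg_of_add_eq_zero_right h]
  have hSi : (S⁻¹).PosDef := hS.inv
  obtain ⟨T, hTT, hTsymm⟩ : ∃ T : Matrix (Fin p) (Fin p) ℝ, T * T = S⁻¹ ∧ Tᵀ = T := by
    open scoped MatrixOrder in
    refine ⟨CFC.sqrt S⁻¹, CFC.sqrt_mul_sqrt_self S⁻¹ hSi.posSemidef.nonneg, ?_⟩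
    open scoped MatrixOrder in
    have := (CFC.sqrt_nonneg S⁻¹).posSemidef.1
    rwa [Matrix.IsHermitian, Matrix.conjTranspose_eq_transpose_of_trivial] at this
  have hXskew : (T * K * T)ᵀ = -(T * K * T) := by
    rw [Matrix.transpose_mul, Matrix.transpose_mul, hTsymm, hKskew]
    noncomm_ring
  have hM' : M = K * S⁻¹ := (Matrix.mul_nonsing_inv_cancel_right S M hdetS).symm
  have hMM : M * M = (K * T) * (T * (K * (T * T))) := by
    rw [hM', ← hTT]; noncomm_ring
  have t2 : (M * M).trace = ((T * K * T) * (T * K * T)).trace := by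
    rw [hMM, Matrix.trace_mul_comm]
    congr 1
    noncomm_ring
  have t1 : (M * M).trace = ∑ i, M i i * M i i := by
    rw [Matrix.trace]
    refine Finset.sum_congr rfl fun i _ => ?_
    rw [Matrix.diag_apply, Matrix.mul_apply]
    refine Finset.sum_eq_single i (fun j _ hji => ?_) (by simp)
    rcases hcomp i j (Ne.symm hji) with ⟨hij, hnji⟩ | ⟨hji', hnij⟩
    · rw [hsupp j i hnji, zero_mul]
    · rw [hsupp i j hnij, mul_zero]
  have t3 := skew_trace_sq (T * K * T) hXskew
  have hsum : ∑ i, M i i * M i i = -∑ i, ∑ j, ((T * K * T) i j)^2 := by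
    rw [← t1, t2, t3]
  have h1 : (0:ℝ) ≤ ∑ i, M i i * M i i := Finset.sum_nonneg fun i _ => mul_self_nonneg _
  have h2 : (0:ℝ) ≤ ∑ i, ∑ j, ((T * K * T) i j)^2 :=
    Finset.sum_nonneg fun i _ => Finset.sum_nonneg fun j _ => sq_nonneg _
  have hzero : ∑ i, ∑ j, ((T * K * T) i j)^2 = 0 := by linarith
  have hXzero : T * K * T = 0 := by
    ext i j
    have h3 : ∀ i ∈ Finset.univ, (0:ℝ) ≤ ∑ j, ((T * K * T) i j)^2 :=
      fun i _ => Finset.sum_nonneg fun j _ => sq_nonneg _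
    have h4 := (Finset.sum_eq_zero_iff_of_nonneg h3).1 hzero i (Finset.mem_univ i)
    have h5 := (Finset.sum_eq_zero_iff_of_nonneg
      (fun j _ => sq_nonneg ((T * K * T) i j))).1 h4 j (Finset.mem_univ j)
    simpa using sq_eq_zero_iff.mp h5
  have hTdet : IsUnit T.det := by
    have hdd : T.det * T.det = (S⁻¹).det := by rw [← Matrix.det_mul, hTT]
    have hu : IsUnit ((S⁻¹).det) := isUnit_iff_ne_zero.mpr hSi.det_pos.ne'
    rw [← hdd] at hu
    exact isUnit_of_mul_isUnit_left hu
  have hK0 : K = 0 := by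
    have e1 : T⁻¹ * (T * K * T) * T⁻¹ = K := by
      rw [Matrix.mul_assoc T K T, Matrix.nonsing_inv_mul_cancel_left T (K * T) hTdet,
          Matrix.mul_nonsing_inv_cancel_right T K hTdet]
    rw [← e1, hXzero, Matrix.mul_zero, Matrix.zero_mul]
  rw [hM', hK0, Matrix.zero_mul]

/-- The pattern-projected Lyapunov operator as an endomorphism of `ℝ^E`. -/
noncomputable def lyapPhi {p : ℕ} (E : Set (Fin p × Fin p)) (S : Matrix (Fin p) (Fin p) ℝ) :
    suppSub E →ₗ[ℝ] suppSub E where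
  toFun M := ⟨projE E ((M : Matrix (Fin p) (Fin p) ℝ) * S + S * (M : Matrix (Fin p) (Fin p) ℝ)ᵀ),
    projE_inSupp E _⟩
  map_add' M N := Subtype.ext (by
    funext j i
    by_cases h : (i, j) ∈ E <;>
      simp [projE, h, Matrix.add_mul, Matrix.mul_add, Matrix.transpose_add, Matrix.add_apply] <;>
      ring)
  map_smul' c M := Subtype.ext (by
    funext j i
    by_cases h : (i, j) ∈ E <;>
      simp [projE, h, Matrix.smul_mul, Matrix.mul_smul, Matrix.transpose_smul,
        Matrix.smul_apply, Matrix.add_apply, mul_add] <;>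
      ring)

theorem complete_simple_model_eq_posdef' {p : ℕ}
    (E : Set (Fin p × Fin p)) (hloops : ∀ i : Fin p, (i, i) ∈ E)
    (hcomp : ∀ i j : Fin p, i ≠ j → Xor' ((i, j) ∈ E) ((j, i) ∈ E))
    (C : Matrix (Fin p) (Fin p) ℝ) (hC : C.PosDef) :
    ({S | S.PosDef ∧ ∃ M : Matrix (Fin p) (Fin p) ℝ, InSupp E M ∧ M * S + S * Mᵀ + C = 0} : Set _)
      = {S : Matrix (Fin p) (Fin p) ℝ | S.PosDef} := by
  classical
  ext S
  simp only [Set.mem_setOf_eq]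
  constructor
  · rintro ⟨h, -⟩; exact h
  · intro hSpd
    refine ⟨hSpd, ?_⟩
    have hSsymm : Sᵀ = S := by
      have := hSpd.1
      rwa [Matrix.IsHermitian, Matrix.conjTranspose_eq_transpose_of_trivial] at this
    have hCsymm : Cᵀ = C := by
      have := hC.1
      rwa [Matrix.IsHermitian, Matrix.conjTranspose_eq_transpose_of_trivial] at this
    have hker : ∀ M : suppSub E, lyapPhi E S M = 0 → M = 0 := by
      intro M hM0
      have h0 : projE E ((M : Matrix (Fin p) (Fin p) ℝ) * S
          + S * (M : Matrix (Fin p) (Fin p) ℝ)ᵀ) = 0 := congrArg Subtype.val hM0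
      have hQsymm : ((M : Matrix (Fin p) (Fin p) ℝ) * S
          + S * (M : Matrix (Fin p) (Fin p) ℝ)ᵀ)ᵀ
          = (M : Matrix (Fin p) (Fin p) ℝ) * S + S * (M : Matrix (Fin p) (Fin p) ℝ)ᵀ := by
        rw [Matrix.transpose_add, Matrix.transpose_mul, Matrix.transpose_mul,
          Matrix.transpose_transpose, hSsymm]
        exact add_comm _ _
      have hQ0 := symm_eq_zero_of_projE E hloops hcomp _ hQsymm h0
      have := lyap_inj_core E hcomp hSpd M.2 hQ0
      exact Subtype.ext this
    have hinj : Function.Injective (lyapPhi E S) :=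
      LinearMap.ker_eq_bot.mp (LinearMap.ker_eq_bot'.mpr hker)
    have hsurj := LinearMap.injective_iff_surjective.mp hinj
    obtain ⟨M, hM⟩ := hsurj ⟨projE E (-C), projE_inSupp E _⟩
    refine ⟨(M : Matrix (Fin p) (Fin p) ℝ), M.2, ?_⟩
    have hM' : projE E ((M : Matrix (Fin p) (Fin p) ℝ) * S
        + S * (M : Matrix (Fin p) (Fin p) ℝ)ᵀ) = projE E (-C) := congrArg Subtype.val hM
    have hQsymm : ((M : Matrix (Fin p) (Fin p) ℝ) * S
        + S * (M : Matrix (Fin p) (Fin p) ℝ)ᵀ + C)ᵀ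
        = (M : Matrix (Fin p) (Fin p) ℝ) * S + S * (M : Matrix (Fin p) (Fin p) ℝ)ᵀ + C := by
      rw [Matrix.transpose_add, Matrix.transpose_add, Matrix.transpose_mul, Matrix.transpose_mul,
        Matrix.transpose_transpose, hSsymm, hCsymm]
      abel
    have hproj0 : projE E ((M : Matrix (Fin p) (Fin p) ℝ) * S
        + S * (M : Matrix (Fin p) (Fin p) ℝ)ᵀ + C) = 0 := by
      funext j i
      by_cases h : (i, j) ∈ E
      · have h1 := congrFun (congrFun hM' j) i
        simp only [projE, h, if_true, Matrix.neg_apply] at h1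
        simp only [projE, h, if_true, Matrix.add_apply, Matrix.zero_apply]
        rw [Matrix.add_apply] at h1
        linarith
      · simp [projE, h]
    exact symm_eq_zero_of_projE E hloops hcomp _ hQsymm hproj0

/-- for a complete simple graph (with all self-loops, and for every
pair of distinct nodes exactly one of the two possible edges), the model equals the
whole positive definite cone. -/
theorem complete_simple_model_eq_posdef {p : ℕ}
    (E : Set (Fin p × Fin p)) (hloops : ∀ i : Fin p, (i, i) ∈ E)
    (hcomp : ∀ i j : Fin p, i ≠ j → Xor' ((i, j) ∈ E) ((j, i) ∈ E))
    (C : Matrix (Fin p) (Fin p) ℝ) (hC : C.PosDef) :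
    LyapModel E C = {S : Matrix (Fin p) (Fin p) ℝ | S.PosDef} := by
  exact complete_simple_model_eq_posdef' E hloops hcomp C hC
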